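/- Let H be an N×M complex matrix of rank min(M, N) and let α ≥ 0 be a real number. For each real x > 1, the matrix I_N + x^α H H† is Hermitian positive definite, so its determinant is a positive real number. Then the function x ↦ log det(I_N + x^α H H†) / log x tends to α · min(M, N) as x → ∞. -/

import Mathlib

open scoped ComplexOrder Matrix

open Matrix Filter in
/-- det of `1 + c • A` for Hermitian `A` as a product over eigenvalues. -/
lemma det_one_add_real_smul {n : Type*} [Fintype n] [DecidableEq n]
    {A : Matrix n n ℂ} (hA : A.IsHermitian) (c : ℝ) :
    ((1 : Matrix n n ℂ) + (c : ℂ) • A).det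
      = ∏ i, (((1 + c * hA.eigenvalues i : ℝ)) : ℂ) := by
  set U : Matrix n n ℂ := (hA.eigenvectorUnitary : Matrix n n ℂ) with hUdef
  have hU : U * star U = 1 := (Matrix.mem_unitaryGroup_iff).mp hA.eigenvectorUnitary.2
  set D : Matrix n n ℂ := Matrix.diagonal (RCLike.ofReal ∘ hA.eigenvalues) with hDdef
  have key : (1 : Matrix n n ℂ) + (c : ℂ) • A = U * ((1 : Matrix n n ℂ) + (c : ℂ) • D) * star U := by
    conv_lhs => rw [hA.spectral_theorem, Unitary.conjStarAlgAut_apply]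
    rw [mul_add, add_mul, mul_one, hU, Matrix.mul_smul, Matrix.smul_mul]
  have hdiag : (1 : Matrix n n ℂ) + (c : ℂ) • D
      = Matrix.diagonal (fun i => ((1 + c * hA.eigenvalues i : ℝ) : ℂ)) := by
    ext i j
    rcases eq_or_ne i j with rfl | h
    · simp [hDdef, Matrix.one_apply, Matrix.diagonal_apply]
    · simp [hDdef, Matrix.one_apply, Matrix.diagonal_apply, h]
  rw [key, Matrix.det_mul_right_comm, hU, one_mul, hdiag, Matrix.det_diagonal]

open Matrix Filter in
/-- For a full-rank N×M complex matrix `H` (rank `min M N`) and `α ≥ 0`: for every `x > 1`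
the matrix `I + x^α H Hᴴ` is Hermitian positive definite (so its determinant is a positive
real), and `log det(I + x^α H Hᴴ) / log x → α · min M N` as `x → ∞`. -/
theorem log_det_growth {M N : ℕ} (H : Matrix (Fin N) (Fin M) ℂ)
    (hrank : H.rank = min M N) (α : ℝ) (hα : 0 ≤ α) :
    (∀ x : ℝ, 1 < x →
      ((1 : Matrix (Fin N) (Fin N) ℂ) + ((x ^ α : ℝ) : ℂ) • (H * Hᴴ)).PosDef) ∧
    Filter.Tendsto
      (fun x : ℝ =>
        Real.log (((1 : Matrix (Fin N) (Fin N) ℂ) + ((x ^ α : ℝ) : ℂ) • (H * Hᴴ)).det.re) /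
          Real.log x)
      Filter.atTop (nhds (α * (min M N : ℝ))) := by
  classical
  have hA : (H * Hᴴ).IsHermitian := isHermitian_mul_conjTranspose_self H
  have hPSD : (H * Hᴴ).PosSemidef := posSemidef_self_mul_conjTranspose H
  set lam : Fin N → ℝ := hA.eigenvalues with hlam
  have hlam_nonneg : ∀ i, 0 ≤ lam i := hPSD.eigenvalues_nonneg
  -- positive definiteness
  have hPD : ∀ x : ℝ, 1 < x →
      ((1 : Matrix (Fin N) (Fin N) ℂ) + ((x ^ α : ℝ) : ℂ) • (H * Hᴴ)).PosDef := by
    intro x hx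
    have hc : (0 : ℝ) ≤ x ^ α := (Real.rpow_pos_of_pos (by linarith) α).le
    refine Matrix.PosDef.add_posSemidef Matrix.PosDef.one ?_
    refine ⟨?_, fun y => ?_⟩
    · show _ = _
      rw [Matrix.conjTranspose_smul, hA.eq]
      congr 1
      simp [Complex.star_def, Complex.conj_ofReal]
    · have h2 := hPSD.2 y
      have h3 : (y.sum fun i xi => y.sum fun j xj => star xi * (((x ^ α : ℝ) : ℂ) • (H * Hᴴ)) i j * xj)
          = ((x ^ α : ℝ) : ℂ) * (y.sum fun i xi => y.sum fun j xj => star xi * (H * Hᴴ) i j * xj) := by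
        simp only [Finsupp.sum, Finset.mul_sum, Matrix.smul_apply, smul_eq_mul]
        refine Finset.sum_congr rfl fun i _ => Finset.sum_congr rfl fun j _ => ?_
        ring
      rw [h3]
      exact mul_nonneg (by exact_mod_cast hc) h2
  refine ⟨hPD, ?_⟩
  -- the determinant as a real product
  have hdet : ∀ x : ℝ,
      (((1 : Matrix (Fin N) (Fin N) ℂ) + ((x ^ α : ℝ) : ℂ) • (H * Hᴴ)).det).re
        = ∏ i, (1 + x ^ α * lam i) := by
    intro x
    rw [det_one_add_real_smul hA, ← Complex.ofReal_prod, Complex.ofReal_re]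
  -- count of nonzero eigenvalues
  have hcard : (Finset.univ.filter fun i => lam i ≠ 0).card = min M N := by
    have h1 := hA.rank_eq_card_non_zero_eigs
    rw [Matrix.rank_self_mul_conjTranspose, hrank] at h1
    rw [← hlam, Fintype.card_subtype] at h1
    omega
  rcases eq_or_lt_of_le hα with rfl | hαpos
  · -- α = 0 : the function is constant over log x
    simp only [Real.rpow_zero, zero_mul]
    exact tendsto_const_nhds.div_atTop Real.tendsto_log_atTop
  -- α > 0
  have hterm : ∀ i : Fin N,
      Tendsto (fun x : ℝ => Real.log (1 + x ^ α * lam i) / Real.log x)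
        atTop (nhds (if lam i ≠ 0 then α else 0)) := by
    intro i
    rcases eq_or_ne (lam i) 0 with h0 | h0
    · rw [if_neg (by simp [h0])]
      simp only [h0, mul_zero, add_zero, Real.log_one, zero_div]
      exact tendsto_const_nhds
    · have hl : 0 < lam i := (hlam_nonneg i).lt_of_ne (Ne.symm h0)
      rw [if_pos h0]
      have hev : (fun x : ℝ => α + Real.log (x ^ (-α) + lam i) / Real.log x)
          =ᶠ[atTop] fun x : ℝ => Real.log (1 + x ^ α * lam i) / Real.log x := by
        filter_upwards [eventually_gt_atTop 1] with x hx
        have hx0 : (0:ℝ) < x := by linarith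
        have h1 : (1:ℝ) + x ^ α * lam i = x ^ α * (x ^ (-α) + lam i) := by
          rw [mul_add, ← Real.rpow_add hx0]
          simp
        have hxa : (0:ℝ) < x ^ α := Real.rpow_pos_of_pos hx0 α
        have hpos2 : (0:ℝ) < x ^ (-α) + lam i :=
          add_pos (Real.rpow_pos_of_pos hx0 _) hl
        have hlogx : Real.log x ≠ 0 := by
          have := Real.log_pos hx; linarith
        rw [h1, Real.log_mul hxa.ne' hpos2.ne', Real.log_rpow hx0, add_div,
          mul_div_assoc, div_self hlogx, mul_one]
      refine Tendsto.congr' hev ?_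
      have h2 : Tendsto (fun x : ℝ => Real.log (x ^ (-α) + lam i)) atTop
          (nhds (Real.log (lam i))) := by
        have h3 : Tendsto (fun x : ℝ => x ^ (-α) + lam i) atTop (nhds (0 + lam i)) :=
          (tendsto_rpow_neg_atTop hαpos).add tendsto_const_nhds
        rw [zero_add] at h3
        exact (Real.continuousAt_log hl.ne').tendsto.comp h3
      have h4 := h2.div_atTop Real.tendsto_log_atTop
      simpa using tendsto_const_nhds.add h4
  have hsum := tendsto_finset_sum Finset.univ (fun i _ => hterm i)
  have hval : (∑ i, if lam i ≠ 0 then α else 0) = α * (min M N : ℝ) := by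
    rw [← Finset.sum_filter, Finset.sum_const, hcard, nsmul_eq_mul, mul_comm]
    push_cast
    ring
  rw [hval] at hsum
  refine Tendsto.congr' ?_ hsum
  filter_upwards [eventually_gt_atTop 1] with x hx
  have hx0 : (0:ℝ) < x := by linarith
  have hfac : ∀ i : Fin N, (1 : ℝ) + x ^ α * lam i ≠ 0 := fun i =>
    (add_pos_of_pos_of_nonneg one_pos
      (mul_nonneg (Real.rpow_pos_of_pos hx0 α).le (hlam_nonneg i))).ne'
  rw [← Finset.sum_div, ← Real.log_prod (fun i _ => hfac i), ← hdet x]
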